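/- Let C ⊆ ℝ^d be a closed convex set whose recession cone rec(C) := {r ∈ ℝ^d : x + r ∈ C for all x ∈ C} is a linear subspace L ⊆ ℝ^d. Then for every w ∈ int(C), one has ca(C,w) = ca(C|L^⊥, w|L^⊥), where X|L^⊥ denotes the orthogonal projection of X onto the orthogonal complement L^⊥. -/

import Mathlib

open Pointwise

/-- The coefficient of asymmetry of a point `w` in a convex set `K`:
`ca(K,w) = min{λ ≥ 1 : w − K ⊆ λ(K − w)}`. -/
noncomputable def ca {E : Type*} [AddCommGroup E] [Module ℝ E] (K : Set E) (w : E) : ℝ :=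
  sInf {l : ℝ | 1 ≤ l ∧ ({w} : Set E) - K ⊆ l • (K - {w})}

theorem ca_linear_recession_cone
    {d : ℕ} (C : Set (EuclideanSpace ℝ (Fin d)))
    (hCconv : Convex ℝ C) (hCclosed : IsClosed C)
    (L : Submodule ℝ (EuclideanSpace ℝ (Fin d)))
    (hrec : (L : Set (EuclideanSpace ℝ (Fin d))) = {r | ∀ x ∈ C, x + r ∈ C})
    (w : EuclideanSpace ℝ (Fin d)) (hw : w ∈ interior C) :
    ca C w = ca ((fun x => ((Submodule.orthogonalProjectionOnto Lᗮ x : Lᗮ) : EuclideanSpace ℝ (Fin d))) '' C)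
      ((Submodule.orthogonalProjectionOnto Lᗮ w : Lᗮ) : EuclideanSpace ℝ (Fin d)) := by
  set T : EuclideanSpace ℝ (Fin d) →L[ℝ] EuclideanSpace ℝ (Fin d) :=
    Lᗮ.subtypeL.comp (Submodule.orthogonalProjectionOnto Lᗮ) with hTdef
  have hT : (fun x => ((Submodule.orthogonalProjectionOnto Lᗮ x : Lᗮ) : EuclideanSpace ℝ (Fin d))) = ⇑T := rfl
  have hLmem : ∀ x : EuclideanSpace ℝ (Fin d), x - T x ∈ L := by
    intro x
    have h := Submodule.sub_starProjection_mem_orthogonal (K := Lᗮ) x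
    rwa [Submodule.orthogonal_orthogonal] at h
  have hC : ∀ c ∈ C, ∀ r ∈ L, c + r ∈ C := by
    intro c hc r hr
    have hr' : r ∈ (L : Set (EuclideanSpace ℝ (Fin d))) := hr
    rw [hrec] at hr'
    exact hr' c hc
  have hTC : ∀ c ∈ C, T c ∈ C := by
    intro c hc
    have := hC c hc (-(c - T c)) (neg_mem (hLmem c))
    simpa using this
  unfold ca
  congr 1
  ext l
  simp only [Set.mem_setOf_eq, hT]
  constructor
  · rintro ⟨hl, h⟩
    refine ⟨hl, ?_⟩
    rintro y hy
    rw [Set.mem_sub] at hy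
    obtain ⟨a, ha, b, hb, hab⟩ := hy
    rw [Set.mem_singleton_iff] at ha
    obtain ⟨c, hc, rfl⟩ := hb
    rw [ha] at hab; subst hab
    have h2 := h (Set.sub_mem_sub (Set.mem_singleton w) hc)
    rw [Set.mem_smul_set] at h2
    obtain ⟨z, hz, hz2⟩ := h2
    rw [Set.mem_sub] at hz
    obtain ⟨c', hc', w', hw', rfl⟩ := hz
    rw [Set.mem_singleton_iff] at hw'; rw [hw'] at hz2
    refine Set.mem_smul_set.mpr ⟨T c' - T w, Set.sub_mem_sub ⟨c', hc', rfl⟩ rfl, ?_⟩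
    have h5 := congrArg T hz2
    simp only [map_smul, map_sub] at h5
    exact h5
  · rintro ⟨hl, h⟩
    refine ⟨hl, ?_⟩
    rintro y hy
    rw [Set.mem_sub] at hy
    obtain ⟨a, ha, c, hc, hab⟩ := hy
    rw [Set.mem_singleton_iff] at ha
    rw [ha] at hab; subst hab
    have hlpos : (0:ℝ) < l := lt_of_lt_of_le one_pos hl
    have h1 : T w - T c ∈ ({T w} : Set (EuclideanSpace ℝ (Fin d))) - T '' C :=
      Set.sub_mem_sub (Set.mem_singleton _) ⟨c, hc, rfl⟩
    obtain ⟨z, hz, hz2⟩ := Set.mem_smul_set.mp (h h1)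
    obtain ⟨p, hp, q, hq, rfl⟩ := Set.mem_sub.mp hz
    obtain ⟨c'', hc'', rfl⟩ := hp
    rw [Set.mem_singleton_iff] at hq; subst hq
    set u : EuclideanSpace ℝ (Fin d) := w + l⁻¹ • (w - c) with hu_def
    have hu : T u = T c'' := by
      have h3 : T u = T w + l⁻¹ • (T w - T c) := by
        simp [hu_def, map_add, map_smul, map_sub]
      rw [h3, ← hz2, smul_smul, inv_mul_cancel₀ hlpos.ne', one_smul]
      have hrfl : ((Submodule.orthogonalProjectionOnto Lᗮ w : Lᗮ) : EuclideanSpace ℝ (Fin d)) = T w := rfl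
      rw [hrfl]
      abel
    have huC : u ∈ C := by
      have h3 : T c'' ∈ C := hTC c'' hc''
      have h4 := hC (T c'') h3 (u - T u) (hLmem u)
      rw [hu] at h4
      simpa using h4
    refine Set.mem_smul_set.mpr ⟨u - w, Set.sub_mem_sub huC (Set.mem_singleton _), ?_⟩
    simp [hu_def, smul_smul, mul_inv_cancel₀ hlpos.ne']
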